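/- In the 3-approval conformant bribery construction from 3DM: given pairwise disjoint X, Y, Z of size k with every element in exactly three triples of M ⊆ X × Y × Z, form the election with candidates {p, p₁, p₂} ∪ X ∪ Y ∪ Z ∪ {d₁,…,d_{6k(k−1)}}, one voter approving {x,y,z} for each (x,y,z) ∈ M, one voter approving {p,p₁,p₂}, and 3k(k−1) padding voters such that each a ∈ X ∪ Y ∪ Z is approved by exactly k−1 padding voters, each padding voter approving one element of X ∪ Y ∪ Z and two distinct dummy candidates, with each dummy approved at most once overall. Then p can be made a 3-approval winner by changing at most k votes to votes occurring in the election if and only if M contains a perfect matching of size k. -/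
import Mathlib


/-- The ground set of a 3DM instance with `|X| = |Y| = |Z| = k`, the three
summands representing `X`, `Y`, `Z` (pairwise disjoint by construction). -/
abbrev Elem (k : ℕ) := Fin k ⊕ Fin k ⊕ Fin k

/-- Candidates for the 3-approval conformant bribery construction: `none` is
the preferred candidate `p`; `some (inl a)` is the candidate for ground
element `a`; `some (inr (inl 0))`, `some (inr (inl 1))` are `p₁`, `p₂`; and
`some (inr (inr j))` for `j < 6k(k-1)` are the dummies `d₁, …, d_{6k(k-1)}`. -/
abbrev Cand10 (k : ℕ) := Option (Elem k ⊕ (Fin 2 ⊕ Fin (6 * k * (k - 1))))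

def elC10 {k : ℕ} (a : Elem k) : Cand10 k := some (Sum.inl a)

def dumC10 {k : ℕ} (j : Fin (6 * k * (k - 1))) : Cand10 k :=
  some (Sum.inr (Sum.inr j))

/-- A vote is modeled by its set of (three) approved candidates. -/
def tripleVote10 {k : ℕ} (t : Fin k × Fin k × Fin k) : Finset (Cand10 k) :=
  {elC10 (Sum.inl t.1), elC10 (Sum.inr (Sum.inl t.2.1)),
    elC10 (Sum.inr (Sum.inr t.2.2))}

/-- The vote approving `{p, p₁, p₂}`. -/
def pVote10 (k : ℕ) : Finset (Cand10 k) :=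
  {none, some (Sum.inr (Sum.inl 0)), some (Sum.inr (Sum.inl 1))}

/-- The 3-approval score of a candidate. -/
def appScore10 {k : ℕ} (V : Multiset (Finset (Cand10 k))) (c : Cand10 k) : ℕ :=
  @Multiset.countP _ (fun s => c ∈ s) (fun s => Finset.decidableMem c s) V

/-- `M` contains a perfect matching of size `k`. -/
def matching3 {k : ℕ} (M : Finset (Fin k × Fin k × Fin k)) : Prop :=
  ∃ M' ⊆ M, M'.card = k ∧
    (∀ i : Fin k, (M'.filter (fun t => t.1 = i)).card = 1) ∧
    (∀ i : Fin k, (M'.filter (fun t => t.2.1 = i)).card = 1) ∧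
    (∀ i : Fin k, (M'.filter (fun t => t.2.2 = i)).card = 1)

section helpers
variable {k : ℕ}

lemma mem_triple_iff (a : Elem k) (t : Fin k × Fin k × Fin k) :
    elC10 a ∈ tripleVote10 t ↔
      a = Sum.inl t.1 ∨ a = Sum.inr (Sum.inl t.2.1) ∨ a = Sum.inr (Sum.inr t.2.2) := by
  simp [tripleVote10, elC10]

lemma mem_triple_inl (i : Fin k) (t : Fin k × Fin k × Fin k) :
    elC10 (Sum.inl i) ∈ tripleVote10 t ↔ t.1 = i := by
  simp [mem_triple_iff, eq_comm]

lemma mem_triple_inrl (i : Fin k) (t : Fin k × Fin k × Fin k) :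
    elC10 (Sum.inr (Sum.inl i)) ∈ tripleVote10 t ↔ t.2.1 = i := by
  simp [mem_triple_iff, eq_comm]

lemma mem_triple_inrr (i : Fin k) (t : Fin k × Fin k × Fin k) :
    elC10 (Sum.inr (Sum.inr i)) ∈ tripleVote10 t ↔ t.2.2 = i := by
  simp [mem_triple_iff, eq_comm]

lemma none_notMem_triple (t : Fin k × Fin k × Fin k) :
    (none : Cand10 k) ∉ tripleVote10 t := by
  simp [tripleVote10, elC10]

lemma p12_notMem_triple (j : Fin 2) (t : Fin k × Fin k × Fin k) :
    (some (Sum.inr (Sum.inl j)) : Cand10 k) ∉ tripleVote10 t := by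
  simp [tripleVote10, elC10]

lemma dum_notMem_triple (j : Fin (6 * k * (k - 1))) (t : Fin k × Fin k × Fin k) :
    dumC10 j ∉ tripleVote10 t := by
  simp [tripleVote10, elC10, dumC10]

lemma none_mem_pVote : (none : Cand10 k) ∈ pVote10 k := by simp [pVote10]

lemma el_notMem_pVote (a : Elem k) : elC10 a ∉ pVote10 k := by
  simp [pVote10, elC10]

lemma dum_notMem_pVote (j : Fin (6 * k * (k - 1))) : dumC10 j ∉ pVote10 k := by
  simp [pVote10, dumC10]

lemma tripleVote10_injective : Function.Injective (tripleVote10 (k := k)) := by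
  rintro ⟨x, y, z⟩ ⟨x', y', z'⟩ h
  have m1 : elC10 (Sum.inl x) ∈ tripleVote10 ((x', y', z') : Fin k × Fin k × Fin k) := by
    rw [← h, mem_triple_inl]
  have m2 : elC10 (Sum.inr (Sum.inl y)) ∈ tripleVote10 ((x', y', z') : Fin k × Fin k × Fin k) := by
    rw [← h, mem_triple_inrl]
  have m3 : elC10 (Sum.inr (Sum.inr z)) ∈ tripleVote10 ((x', y', z') : Fin k × Fin k × Fin k) := by
    rw [← h, mem_triple_inrr]
  rw [mem_triple_inl] at m1
  rw [mem_triple_inrl] at m2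
  rw [mem_triple_inrr] at m3
  simp_all

lemma appScore10_add (s t : Multiset (Finset (Cand10 k))) (c : Cand10 k) :
    appScore10 (s + t) c = appScore10 s c + appScore10 t c :=
  Multiset.countP_add _ _ _

lemma appScore10_map (s : Multiset (Fin k × Fin k × Fin k)) (c : Cand10 k) :
    appScore10 (s.map tripleVote10) c =
      Multiset.card (s.filter fun t => c ∈ tripleVote10 t) :=
  Multiset.countP_map _ _ _

lemma appScore10_singleton (v : Finset (Cand10 k)) (c : Cand10 k) :
    appScore10 {v} c = if c ∈ v then 1 else 0 := by
  show Multiset.countP _ (v ::ₘ 0) = _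
  rw [Multiset.countP_cons, Multiset.countP_zero, zero_add]

lemma appScore10_replicate (n : ℕ) (v : Finset (Cand10 k)) (c : Cand10 k) :
    appScore10 (Multiset.replicate n v) c = if c ∈ v then n else 0 := by
  induction n with
  | zero => simp [appScore10]
  | succ n ih =>
    rw [Multiset.replicate_succ]
    show Multiset.countP _ (_ ::ₘ _) = _
    rw [Multiset.countP_cons]
    rw [show Multiset.countP _ (Multiset.replicate n v) = appScore10 (Multiset.replicate n v) c from rfl, ih]
    by_cases h : c ∈ v <;> simp [h]

lemma appScore10_eq_zero (s : Multiset (Finset (Cand10 k))) (c : Cand10 k)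
    (h : ∀ v ∈ s, c ∉ v) : appScore10 s c = 0 :=
  Multiset.countP_eq_zero.2 h

lemma appScore10_le_card (s : Multiset (Finset (Cand10 k))) (c : Cand10 k) :
    appScore10 s c ≤ Multiset.card s :=
  Multiset.countP_le_card _ _

lemma appScore10_le_of_le {s t : Multiset (Finset (Cand10 k))} (h : s ≤ t) (c : Cand10 k) :
    appScore10 s c ≤ appScore10 t c :=
  Multiset.countP_le_of_le _ h

lemma sum_appScore (R : Multiset (Finset (Cand10 k))) :
    ∑ a : Elem k, appScore10 R (elC10 a) =
      (R.map fun v => (Finset.univ.filter fun a : Elem k => elC10 a ∈ v).card).sum := by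
  induction R using Multiset.induction_on with
  | empty => simp [appScore10]
  | cons v R ih =>
    have hstep : ∀ a : Elem k, appScore10 (v ::ₘ R) (elC10 a) =
        appScore10 R (elC10 a) + if elC10 a ∈ v then 1 else 0 := fun a =>
      Multiset.countP_cons _ _ _
    simp only [hstep, Finset.sum_add_distrib, ih, Multiset.map_cons, Multiset.sum_cons,
      Finset.card_filter]
    ring

lemma all_eq_of_sum_eq {s : Multiset ℕ} {n : ℕ} (h : ∀ x ∈ s, x ≤ n)
    (hs : s.sum = Multiset.card s * n) : ∀ x ∈ s, x = n := by
  induction s using Multiset.induction_on with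
  | empty => simp
  | cons b s ih =>
    have hb : b ≤ n := h b (Multiset.mem_cons_self _ _)
    have hsum : s.sum ≤ Multiset.card s * n := by
      have := Multiset.sum_le_card_nsmul s n (fun x hx => h x (Multiset.mem_cons_of_mem hx))
      simpa [smul_eq_mul, mul_comm] using this
    rw [Multiset.sum_cons, Multiset.card_cons, add_mul, one_mul] at hs
    have hbn : b = n := by omega
    have hrest := ih (fun x hx => h x (Multiset.mem_cons_of_mem hx)) (by omega)
    intro x hx
    rcases Multiset.mem_cons.1 hx with rfl | hx
    · exact hbn
    · exact hrest x hx

end helpers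

/-- In the 3-approval conformant bribery construction from 3DM
(with `k > 0`, every ground element in exactly three triples of `M`), with
votes consisting of one voter approving `{x,y,z}` per triple, one voter
approving `{p,p₁,p₂}`, and `3k(k-1)` padding voters `P` such that every
ground element is approved by exactly `k-1` padding voters, every padding
voter approves one ground element and two distinct dummies, and every dummy
is approved at most once: `p` can be made a 3-approval winner by changing at
most `k` votes to votes occurring in the election iff `M` contains a perfect
matching of size `k`. -/

theorem stmt_10 (k : ℕ) (hk : 0 < k) (M : Finset (Fin k × Fin k × Fin k))
    (h1 : ∀ i : Fin k, (M.filter (fun t => t.1 = i)).card = 3)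
    (h2 : ∀ i : Fin k, (M.filter (fun t => t.2.1 = i)).card = 3)
    (h3 : ∀ i : Fin k, (M.filter (fun t => t.2.2 = i)).card = 3)
    (P : Multiset (Finset (Cand10 k)))
    (hPcard : Multiset.card P = 3 * k * (k - 1))
    (hPelem : ∀ a : Elem k,
      @Multiset.countP _ (fun s => elC10 a ∈ s)
        (fun s => Finset.decidableMem _ s) P = k - 1)
    (hPshape : ∀ v ∈ P, ∃ a : Elem k, ∃ d₁ d₂ : Fin (6 * k * (k - 1)),
      d₁ ≠ d₂ ∧ v = {elC10 a, dumC10 d₁, dumC10 d₂})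
    (hPdum : ∀ j : Fin (6 * k * (k - 1)),
      @Multiset.countP _ (fun s => dumC10 j ∈ s)
        (fun s => Finset.decidableMem _ s) P ≤ 1) :
    (∃ R ≤ M.val.map tripleVote10 + {pVote10 k} + P,
        Multiset.card R ≤ k ∧
        ∃ A : Multiset (Finset (Cand10 k)),
          Multiset.card A = Multiset.card R ∧
          (∀ v ∈ A, v ∈ M.val.map tripleVote10 + {pVote10 k} + P) ∧
          ∀ c : Cand10 k,
            appScore10 (M.val.map tripleVote10 + {pVote10 k} + P - R + A) c ≤
              appScore10 (M.val.map tripleVote10 + {pVote10 k} + P - R + A) none)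
      ↔ matching3 M := by
  classical
  have hPel : ∀ a : Elem k, appScore10 P (elC10 a) = k - 1 := hPelem
  have hPdum' : ∀ j, appScore10 P (dumC10 j) ≤ 1 := hPdum
  set T : Multiset (Finset (Cand10 k)) := M.val.map tripleVote10 with hT
  set V : Multiset (Finset (Cand10 k)) := T + {pVote10 k} + P with hV
  -- scores in V
  have hPnone : appScore10 P none = 0 := by
    apply appScore10_eq_zero
    intro v hv
    obtain ⟨a, d₁, d₂, -, rfl⟩ := hPshape v hv
    simp [elC10, dumC10]
  have hPp12 : ∀ j : Fin 2, appScore10 P (some (Sum.inr (Sum.inl j))) = 0 := by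
    intro j
    apply appScore10_eq_zero
    intro v hv
    obtain ⟨a, d₁, d₂, -, rfl⟩ := hPshape v hv
    simp [elC10, dumC10]
  have hPelmem : ∀ a : Elem k, appScore10 P (elC10 a) = k - 1 := hPel
  have hTnone : appScore10 T none = 0 := by
    apply appScore10_eq_zero
    intro v hv
    obtain ⟨t, -, rfl⟩ := Multiset.mem_map.1 hv
    exact none_notMem_triple t
  have hTel : ∀ a : Elem k, appScore10 T (elC10 a) = 3 := by
    intro a
    rw [hT, appScore10_map]
    rcases a with i | i | i
    · rw [Multiset.filter_congr (fun t _ => by rw [mem_triple_inl])]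
      exact h1 i
    · rw [Multiset.filter_congr (fun t _ => by rw [mem_triple_inrl])]
      exact h2 i
    · rw [Multiset.filter_congr (fun t _ => by rw [mem_triple_inrr])]
      exact h3 i
  have hVnone : appScore10 V none = 1 := by
    rw [hV, appScore10_add, appScore10_add, hTnone, hPnone, appScore10_singleton]
    simp [none_mem_pVote]
  have hVel : ∀ a : Elem k, appScore10 V (elC10 a) = k + 2 := by
    intro a
    rw [hV, appScore10_add, appScore10_add, hTel, hPelmem, appScore10_singleton,
      if_neg (el_notMem_pVote a)]
    omega
  -- classification of votes
  have hclass : ∀ v ∈ V, (∃ t ∈ M.val, v = tripleVote10 t) ∨ v = pVote10 k ∨ v ∈ P := by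
    intro v hv
    rw [hV, Multiset.mem_add, Multiset.mem_add] at hv
    rcases hv with (hv | hv) | hv
    · obtain ⟨t, ht, rfl⟩ := Multiset.mem_map.1 hv
      exact Or.inl ⟨t, ht, rfl⟩
    · exact Or.inr (Or.inl (Multiset.mem_singleton.1 hv))
    · exact Or.inr (Or.inr hv)
  -- the counting function f
  set f : Finset (Cand10 k) → ℕ :=
    fun v => (Finset.univ.filter fun a : Elem k => elC10 a ∈ v).card with hf
  have hfT : ∀ t : Fin k × Fin k × Fin k, f (tripleVote10 t) = 3 := by
    intro t
    have he : (Finset.univ.filter fun a : Elem k => elC10 a ∈ tripleVote10 t) =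
        {Sum.inl t.1, Sum.inr (Sum.inl t.2.1), Sum.inr (Sum.inr t.2.2)} := by
      ext a
      simp [mem_triple_iff]
    rw [hf]
    simp only [he]
    rw [Finset.card_insert_of_notMem (by simp), Finset.card_insert_of_notMem (by simp),
      Finset.card_singleton]
  have hfp : f (pVote10 k) = 0 := by
    rw [hf]
    simp only [Finset.card_eq_zero, Finset.filter_eq_empty_iff]
    intro a _
    exact el_notMem_pVote a
  have hfP : ∀ v ∈ P, f v = 1 := by
    intro v hv
    obtain ⟨a₀, d₁, d₂, -, rfl⟩ := hPshape v hv
    have he : (Finset.univ.filter fun a : Elem k =>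
        elC10 a ∈ ({elC10 a₀, dumC10 d₁, dumC10 d₂} : Finset (Cand10 k))) = {a₀} := by
      ext a
      simp [elC10, dumC10]
    rw [hf]
    simp only [he, Finset.card_singleton]
  have hcardElem : Fintype.card (Elem k) = 3 * k := by
    simp [Elem]
    ring
  constructor
  · rintro ⟨R, hR, hRcard, A, hAcard, hAmem, hwin⟩
    -- subtraction formula
    have hVsplit : V - R + R = V := tsub_add_cancel_of_le hR
    have hsubR : ∀ c, appScore10 (V - R) c = appScore10 V c - appScore10 R c := by
      intro c
      have := appScore10_add (V - R) R c
      rw [hVsplit] at this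
      omega
    -- each element needs a removed vote
    have hr1 : ∀ a : Elem k, 1 ≤ appScore10 R (elC10 a) := by
      intro a
      have hw := hwin (elC10 a)
      have e1 : appScore10 (V - R + A) (elC10 a) =
          appScore10 (V - R) (elC10 a) + appScore10 A (elC10 a) := appScore10_add _ _ _
      have e2 : appScore10 (V - R + A) none =
          appScore10 (V - R) none + appScore10 A none := appScore10_add _ _ _
      have e3 : appScore10 (V - R) none ≤ appScore10 V none :=
        appScore10_le_of_le (tsub_le_self) none
      have e4 : appScore10 A none ≤ Multiset.card A := appScore10_le_card _ _
      have e5 := hsubR (elC10 a)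
      have e6 := hVel a
      have e7 : appScore10 R (elC10 a) ≤ Multiset.card R := appScore10_le_card _ _
      rw [hVnone] at e3
      omega
    -- counting
    have habove : ∀ v ∈ R, v ∈ V := fun v hv => Multiset.mem_of_le hR hv
    have hfle : ∀ x ∈ R.map f, x ≤ 3 := by
      intro x hx
      obtain ⟨v, hv, rfl⟩ := Multiset.mem_map.1 hx
      rcases hclass v (habove v hv) with ⟨t, -, rfl⟩ | rfl | hp
      · rw [hfT]
      · rw [hfp]; omega
      · rw [hfP v hp]; omega
    have hsum : ∑ a : Elem k, appScore10 R (elC10 a) = (R.map f).sum := sum_appScore R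
    have hge : 3 * k ≤ ∑ a : Elem k, appScore10 R (elC10 a) := by
      calc 3 * k = ∑ _a : Elem k, 1 := by
            rw [Finset.sum_const, smul_eq_mul, mul_one, Finset.card_univ, hcardElem]
        _ ≤ _ := Finset.sum_le_sum fun a _ => hr1 a
    have hle : (R.map f).sum ≤ Multiset.card R * 3 := by
      have := Multiset.sum_le_card_nsmul (R.map f) 3 hfle
      simpa [smul_eq_mul, mul_comm] using this
    have hcards : Multiset.card (R.map f) = Multiset.card R := Multiset.card_map _ _
    have hcardR : Multiset.card R = k := by omega
    have hsum3k : (R.map f).sum = 3 * k := by omega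
    have hf3 : ∀ v ∈ R, f v = 3 := by
      intro v hv
      exact all_eq_of_sum_eq hfle (by omega) (f v) (Multiset.mem_map_of_mem f hv)
    have hrone : ∀ a : Elem k, appScore10 R (elC10 a) = 1 := by
      intro b
      have hsplit : (∑ a ∈ Finset.univ.erase b, appScore10 R (elC10 a)) +
          appScore10 R (elC10 b) = ∑ a : Elem k, appScore10 R (elC10 a) :=
        Finset.sum_erase_add Finset.univ
          (fun a : Elem k => appScore10 R (elC10 a)) (Finset.mem_univ b)
      have hlow : ((Finset.univ.erase b).card : ℕ) * 1 ≤
          ∑ a ∈ Finset.univ.erase b, appScore10 R (elC10 a) := by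
        have := Finset.card_nsmul_le_sum (Finset.univ.erase b)
          (fun a : Elem k => appScore10 R (elC10 a)) 1 (fun a _ => hr1 a)
        simpa [smul_eq_mul] using this
      have hcarde : (Finset.univ.erase b).card = 3 * k - 1 := by
        rw [Finset.card_erase_of_mem (Finset.mem_univ b), Finset.card_univ, hcardElem]
      have hb := hr1 b
      rw [hcarde] at hlow
      omega
    -- R consists of triple votes
    have hRT : R ≤ T := by
      rw [Multiset.le_iff_count]
      intro s
      by_cases hs : s ∈ R
      · have hf3s := hf3 s hs
        have hcount := Multiset.count_le_of_le s hR
        rw [hV, Multiset.count_add, Multiset.count_add] at hcount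
        have c1 : Multiset.count s ({pVote10 k} : Multiset (Finset (Cand10 k))) = 0 := by
          rw [Multiset.count_singleton, if_neg]
          intro h
          rw [h, hfp] at hf3s
          omega
        have c2 : Multiset.count s P = 0 := by
          rw [Multiset.count_eq_zero]
          intro hsP
          rw [hfP s hsP] at hf3s
          omega
        omega
      · rw [Multiset.count_eq_zero_of_notMem hs]
        omega
    -- extract the matching
    have hTnodup : T.Nodup := Multiset.Nodup.map tripleVote10_injective M.nodup
    have hRnodup : R.Nodup := Multiset.nodup_of_le hRT hTnodup
    set M' : Finset (Fin k × Fin k × Fin k) := M.filter (fun t => tripleVote10 t ∈ R) with hM'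
    have hMapNodup : (M'.val.map tripleVote10).Nodup :=
      Multiset.Nodup.map tripleVote10_injective M'.nodup
    have hReq : R = M'.val.map tripleVote10 := by
      apply le_antisymm
      · rw [Multiset.le_iff_subset hRnodup]
        intro v hv
        have hvT : v ∈ T := Multiset.mem_of_le hRT hv
        obtain ⟨t, htM, rfl⟩ := Multiset.mem_map.1 hvT
        apply Multiset.mem_map_of_mem
        rw [hM', Finset.mem_val, Finset.mem_filter]
        exact ⟨htM, hv⟩
      · rw [Multiset.le_iff_subset hMapNodup]
        intro v hv
        obtain ⟨t, ht, rfl⟩ := Multiset.mem_map.1 hv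
        rw [hM', Finset.mem_val, Finset.mem_filter] at ht
        exact ht.2
    have hcnt : ∀ a : Elem k,
        Multiset.card (M'.val.filter fun t => elC10 a ∈ tripleVote10 t) = 1 := by
      intro a
      have := hrone a
      rw [hReq, appScore10_map] at this
      exact this
    have hfilX : ∀ i : Fin k, (M'.filter (fun t => t.1 = i)).card = 1 := by
      intro i
      have := hcnt (Sum.inl i)
      rw [Multiset.filter_congr (fun t _ => by rw [mem_triple_inl])] at this
      exact this
    have hfilY : ∀ i : Fin k, (M'.filter (fun t => t.2.1 = i)).card = 1 := by
      intro i
      have := hcnt (Sum.inr (Sum.inl i))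
      rw [Multiset.filter_congr (fun t _ => by rw [mem_triple_inrl])] at this
      exact this
    have hfilZ : ∀ i : Fin k, (M'.filter (fun t => t.2.2 = i)).card = 1 := by
      intro i
      have := hcnt (Sum.inr (Sum.inr i))
      rw [Multiset.filter_congr (fun t _ => by rw [mem_triple_inrr])] at this
      exact this
    refine ⟨M', Finset.filter_subset _ _, ?_, hfilX, hfilY, hfilZ⟩
    · have := Finset.card_eq_sum_card_fiberwise
        (f := fun t : Fin k × Fin k × Fin k => t.1) (s := M') (t := Finset.univ)
        (fun t _ => Finset.mem_univ _)
      rw [this]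
      calc (∑ i : Fin k, (M'.filter fun t => t.1 = i).card)
          = ∑ _i : Fin k, 1 := Finset.sum_congr rfl fun i _ => hfilX i
        _ = k := by simp
  · rintro ⟨M', hM'sub, hM'card, hx, hy, hz⟩
    set R : Multiset (Finset (Cand10 k)) := M'.val.map tripleVote10 with hR
    have hRle : R ≤ V := by
      have h0 : R ≤ T := by
        rw [hR, hT]
        exact Multiset.map_le_map (Finset.val_le_iff.2 hM'sub)
      calc R ≤ T := h0
        _ ≤ T + ({pVote10 k} : Multiset (Finset (Cand10 k))) := Multiset.le_add_right _ _
        _ ≤ V := by rw [hV]; exact Multiset.le_add_right _ _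
    have hVsplit : V - R + R = V := tsub_add_cancel_of_le hRle
    have hsubR : ∀ c, appScore10 (V - R) c = appScore10 V c - appScore10 R c := by
      intro c
      have := appScore10_add (V - R) R c
      rw [hVsplit] at this
      omega
    have hcardR : Multiset.card R = k := by
      rw [hR, Multiset.card_map]
      exact hM'card
    have hRnone : appScore10 R none = 0 := by
      apply appScore10_eq_zero
      intro v hv
      obtain ⟨t, -, rfl⟩ := Multiset.mem_map.1 hv
      exact none_notMem_triple t
    have hRel : ∀ a : Elem k, appScore10 R (elC10 a) = 1 := by
      intro a
      rw [hR, appScore10_map]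
      rcases a with i | i | i
      · rw [Multiset.filter_congr (fun t _ => by rw [mem_triple_inl])]
        exact hx i
      · rw [Multiset.filter_congr (fun t _ => by rw [mem_triple_inrl])]
        exact hy i
      · rw [Multiset.filter_congr (fun t _ => by rw [mem_triple_inrr])]
        exact hz i
    refine ⟨R, hRle, le_of_eq hcardR, Multiset.replicate k (pVote10 k), ?_, ?_, ?_⟩
    · rw [Multiset.card_replicate, hcardR]
    · intro v hv
      rw [Multiset.eq_of_mem_replicate hv]
      rw [hV, Multiset.mem_add, Multiset.mem_add]
      exact Or.inl (Or.inr (Multiset.mem_singleton.2 rfl))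
    · intro c
      have hWnone : appScore10 (V - R + Multiset.replicate k (pVote10 k)) none = k + 1 := by
        rw [appScore10_add, hsubR, hVnone, hRnone, appScore10_replicate,
          if_pos none_mem_pVote]
        omega
      rw [hWnone]
      rw [appScore10_add, hsubR]
      rcases c with _ | (a | (j | j))
      · rw [hVnone, hRnone, appScore10_replicate, if_pos none_mem_pVote]
        omega
      · -- ground element
        rw [show (some (Sum.inl a) : Cand10 k) = elC10 a from rfl]
        rw [hVel a, hRel a, appScore10_replicate, if_neg (el_notMem_pVote a)]
        omega
      · -- p₁ / p₂
        have hVp : appScore10 V (some (Sum.inr (Sum.inl j))) = 1 := by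
          rw [hV, appScore10_add, appScore10_add, appScore10_singleton, hPp12 j]
          have hTp : appScore10 T (some (Sum.inr (Sum.inl j))) = 0 := by
            apply appScore10_eq_zero
            intro v hv
            obtain ⟨t, -, rfl⟩ := Multiset.mem_map.1 hv
            exact p12_notMem_triple j t
          rw [hTp]
          have : (some (Sum.inr (Sum.inl j)) : Cand10 k) ∈ pVote10 k := by
            fin_cases j <;> simp [pVote10]
          rw [if_pos this]
        have hrep : appScore10 (Multiset.replicate k (pVote10 k))
            (some (Sum.inr (Sum.inl j))) ≤ k := by
          rw [appScore10_replicate]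
          split <;> omega
        rw [hVp]
        omega
      · -- dummy
        rw [show (some (Sum.inr (Sum.inr j)) : Cand10 k) = dumC10 j from rfl]
        have hVd : appScore10 V (dumC10 j) ≤ 1 := by
          rw [hV, appScore10_add, appScore10_add, appScore10_singleton,
            if_neg (dum_notMem_pVote j)]
          have hTd : appScore10 T (dumC10 j) = 0 := by
            apply appScore10_eq_zero
            intro v hv
            obtain ⟨t, -, rfl⟩ := Multiset.mem_map.1 hv
            exact dum_notMem_triple j t
          rw [hTd]
          have := hPdum' j
          omega
        have hrep : appScore10 (Multiset.replicate k (pVote10 k)) (dumC10 j) = 0 := by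
          rw [appScore10_replicate, if_neg (dum_notMem_pVote j)]
        rw [hrep]
        omega
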